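/- Fix k ≥ 1 and n ≥ 1. The function P_n(θ) = |sin^{2k}(θ) · sin^{2k+1}(2kθ) · sin^{2k+1}((2k)²θ) ··· sin^{2k+1}((2k)^{n-1}θ) · sin((2k)ⁿθ)| attains its maximum over θ ∈ ℝ at θ = πk/(2k+1). -/

import Mathlib

set_option maxHeartbeats 1600000

open Real Finset

private lemma sq_zpow_neg_one_mul (m : ℤ) (a : ℝ) : ((-1:ℝ)^m * a)^2 = a^2 := by
  rcases Int.even_or_odd m with he | ho
  · rw [he.neg_one_zpow]; ring
  · rw [ho.neg_one_zpow]; ring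

private lemma sin_sq_add_int (y : ℝ) (m : ℤ) : Real.sin (y + m * π) ^ 2 = Real.sin y ^ 2 := by
  rw [Real.sin_add_int_mul_pi, sq_zpow_neg_one_mul]

-- sin on [0, π/2] monotone helper
private lemma sin_mono (a b : ℝ) (ha : 0 ≤ a) (hab : a ≤ b) (hb : b ≤ π/2) :
    Real.sin a ≤ Real.sin b := by
  have := Real.strictMonoOn_sin.monotoneOn (a := a) (b := b)
  apply this
  · constructor <;> [linarith [Real.pi_pos]; linarith]
  · constructor <;> [linarith [Real.pi_pos]; linarith]
  · exact hab

private lemma lattice_le (k : ℕ) (hk : 1 ≤ k) (m : ℤ) :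
    Real.sin ((m : ℝ) * π / (2*k+1)) ^ 2 ≤ Real.sin (π * k / (2*k+1)) ^ 2 := by
  have hK : (1:ℝ) ≤ (k:ℝ) := by exact_mod_cast hk
  have hc : (0:ℝ) < 2*(k:ℝ)+1 := by linarith
  have hpi := Real.pi_pos
  set c : ℤ := 2*(k:ℤ)+1 with hcdef
  have hc0 : (0:ℤ) < c := by positivity
  set r : ℤ := m % c with hrdef
  have hr0 : 0 ≤ r := Int.emod_nonneg m (by omega)
  have hrc : r < c := Int.emod_lt_of_pos m hc0
  set q : ℤ := m / c with hqdef
  have hm : m = c * q + r := by rw [hrdef, hqdef]; exact (Int.mul_ediv_add_emod m c).symm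
  have hcR : ((c:ℝ)) = 2*(k:ℝ)+1 := by push_cast [hcdef]; ring
  have hsplit : (m : ℝ) * π / (2*k+1) = (r:ℝ) * π / (2*k+1) + q * π := by
    have : (m:ℝ) = (c:ℝ)*(q:ℝ) + (r:ℝ) := by exact_mod_cast congrArg (Int.cast : ℤ → ℝ) hm
    rw [this, hcR]; field_simp; ring
  rw [hsplit, sin_sq_add_int]
  -- now r ∈ [0, 2k]; goal : sin(rπ/(2k+1))^2 ≤ sin(kπ/(2k+1))^2
  have hsk : Real.sin (π * k / (2*k+1)) ≥ 0 := by
    apply Real.sin_nonneg_of_nonneg_of_le_pi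
    · positivity
    · rw [div_le_iff₀ hc]; nlinarith
  have key : Real.sin ((r:ℝ) * π / (2*k+1)) ≤ Real.sin (π * k / (2*k+1)) := by
    have hhalf : π * k / (2*k+1) ≤ π/2 := by
      rw [div_le_div_iff₀ hc (by norm_num)]; nlinarith
    rcases le_or_gt r k with h | h
    · apply sin_mono _ _ (by positivity) _ hhalf
      have : (r:ℝ) ≤ (k:ℝ) := by exact_mod_cast h
      rw [div_le_div_iff₀ hc hc]
      nlinarith [mul_nonneg (mul_nonneg (sub_nonneg.2 this) hpi.le) hc.le]
    · have h1 : (k:ℝ) + 1 ≤ (r:ℝ) := by exact_mod_cast h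
      have h2 : (r:ℝ) ≤ 2*(k:ℝ) := by
        have : r ≤ 2*(k:ℤ) := by omega
        exact_mod_cast this
      rw [show (r:ℝ) * π / (2*k+1) = π - (2*(k:ℝ)+1-r) * π / (2*k+1) by field_simp; ring,
        Real.sin_pi_sub]
      apply sin_mono _ _ _ _ hhalf
      · apply div_nonneg (mul_nonneg (by linarith) hpi.le) hc.le
      · rw [div_le_div_iff₀ hc hc]
        nlinarith [mul_nonneg (mul_nonneg (sub_nonneg.2 h1) hpi.le) hc.le]
  have hr_nonneg : Real.sin ((r:ℝ) * π / (2*k+1)) ≥ 0 := by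
    apply Real.sin_nonneg_of_nonneg_of_le_pi
    · positivity
    · have h2 : (r:ℝ) ≤ 2*(k:ℝ) := by
        have : r ≤ 2*(k:ℤ) := by omega
        exact_mod_cast this
      rw [div_le_iff₀ hc]; nlinarith
  nlinarith

-- s = cos(π/(2(2k+1))) and (2k+1)s² ≥ 2k
private lemma s_eq_cos (k : ℕ) (hk : 1 ≤ k) :
    Real.sin (π * k / (2*k+1)) = Real.cos (π / (2*(2*(k:ℝ)+1))) := by
  have hc : (2*(k:ℝ)+1) ≠ 0 := by positivity
  rw [← Real.sin_pi_div_two_sub]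
  congr 1
  field_simp
  ring

private lemma s_sq_ge (k : ℕ) (hk : 1 ≤ k) :
    2*(k:ℝ) ≤ (2*(k:ℝ)+1) * Real.sin (π * k / (2*k+1)) ^ 2 := by
  have hK : (1:ℝ) ≤ (k:ℝ) := by exact_mod_cast hk
  have hpi := Real.pi_pos
  rw [s_eq_cos k hk]
  set δ := π / (2*(2*(k:ℝ)+1)) with hδ
  have hδ0 : 0 < δ := by positivity
  have h1 : Real.sin δ ≤ δ := Real.sin_le hδ0.le
  have h2 : 0 ≤ Real.sin δ := by
    apply Real.sin_nonneg_of_nonneg_of_le_pi hδ0.le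
    rw [hδ, div_le_iff₀ (by positivity)]; nlinarith
  have h3 : Real.cos δ ^ 2 = 1 - Real.sin δ ^ 2 := by
    nlinarith [Real.sin_sq_add_cos_sq δ]
  rw [h3]
  have hδle : δ ≤ π / (2*3) := by
    rw [hδ]; apply div_le_div_of_nonneg_left hpi.le (by norm_num) (by linarith)
  have hπ : π < 3.15 := Real.pi_lt_d2
  have hδsq : δ^2 ≤ 1/(2*(k:ℝ)+1) := by
    rw [hδ, div_pow]
    rw [div_le_div_iff₀ (by positivity) (by positivity)]
    have hπ2 : π^2 < 12 := by nlinarith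
    nlinarith [mul_nonneg (by linarith : (0:ℝ) ≤ 2*(k:ℝ)+1) (by linarith : (0:ℝ) ≤ 8*(k:ℝ)-8)]
  have hs2 : Real.sin δ ^ 2 ≤ δ ^ 2 := pow_le_pow_left₀ h2 h1 2
  have e1 : (2*(k:ℝ)+1)*(1/(2*(k:ℝ)+1)) = 1 := by field_simp
  nlinarith [mul_le_mul_of_nonneg_left hδsq (by linarith : (0:ℝ) ≤ 2*(k:ℝ)+1),
    mul_le_mul_of_nonneg_left hs2 (by linarith : (0:ℝ) ≤ 2*(k:ℝ)+1)]

private lemma sin_add_sin' (x y : ℝ) :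
    Real.sin x + Real.sin y = 2 * Real.sin ((x+y)/2) * Real.cos ((x-y)/2) := by
  have h1 := Real.sin_add ((x+y)/2) ((x-y)/2)
  have h2 := Real.sin_sub ((x+y)/2) ((x-y)/2)
  rw [show (x+y)/2 + (x-y)/2 = x by ring] at h1
  rw [show (x+y)/2 - (x-y)/2 = y by ring] at h2
  rw [h1, h2]; ring

private lemma g_le (k : ℕ) (hk : 1 ≤ k) (φ : ℝ) :
    2*(k:ℝ) * Real.sin φ ^ 2 + Real.sin (2*(k:ℝ)*φ) ^ 2
      ≤ (2*(k:ℝ)+1) * Real.sin (π * k / (2*k+1)) ^ 2 := by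
  have hK : (1:ℝ) ≤ (k:ℝ) := by exact_mod_cast hk
  have hpi := Real.pi_pos
  set K := (k:ℝ) with hKdef
  set B := (2*K+1) * Real.sin (π * K / (2*K+1)) ^ 2 with hB
  have hB0 : 0 ≤ B := by positivity
  set f : ℝ → ℝ := fun x => 2*K*Real.sin x^2 + Real.sin (2*K*x)^2 with hf
  have hcont : Continuous f := by fun_prop
  have hderiv : ∀ x : ℝ, HasDerivAt f (2*K*(Real.sin (2*x) + Real.sin (2*(2*K*x)))) x := by
    intro x
    have h1 : HasDerivAt (fun x : ℝ => Real.sin x ^ 2) (2*Real.sin x*Real.cos x) x := by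
      exact ((Real.hasDerivAt_sin x).pow 2).congr_deriv (by ring)
    have h2 : HasDerivAt (fun x : ℝ => 2*K*x) (2*K) x := by
      simpa using (hasDerivAt_id x).const_mul (2*K)
    have h3 : HasDerivAt (fun x : ℝ => Real.sin (2*K*x)) (Real.cos (2*K*x) * (2*K)) x :=
      (Real.hasDerivAt_sin (2*K*x)).comp x h2
    have h4 : HasDerivAt (fun x : ℝ => Real.sin (2*K*x) ^ 2)
        (2*Real.sin (2*K*x)*(Real.cos (2*K*x)*(2*K))) x := by
      exact (h3.pow 2).congr_deriv (by ring)
    have h5 := (h1.const_mul (2*K)).add h4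
    exact h5.congr_deriv (by rw [Real.sin_two_mul, Real.sin_two_mul]; ring)
  suffices hIcc : ∀ x ∈ Set.Icc 0 π, f x ≤ B by
    have hper : Function.Periodic f π := by
      intro y
      have e1 : Real.sin (y + π)^2 = Real.sin y^2 := by
        have := sin_sq_add_int y 1; simpa using this
      have e2 : Real.sin (2*K*(y + π))^2 = Real.sin (2*K*y)^2 := by
        have h : 2*K*(y + π) = 2*K*y + ((2*k : ℤ) : ℝ)*π := by push_cast [hKdef]; ring
        rw [h, sin_sq_add_int]
      simp only [hf, e1, e2]
    obtain ⟨y, hy, hyx⟩ := hper.exists_mem_Ico₀ hpi φ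
    show f φ ≤ B
    rw [hyx]
    exact hIcc y ⟨hy.1, hy.2.le⟩
  -- max attained on compact interval
  obtain ⟨x0, hx0, hmax⟩ := isCompact_Icc.exists_isMaxOn ⟨0, Set.left_mem_Icc.2 hpi.le⟩
    hcont.continuousOn
  intro x hx
  refine le_trans (hmax hx) ?_
  rcases eq_or_lt_of_le hx0.1 with h0 | h0
  · have : f 0 = 0 := by simp [hf]
    rw [← h0, this]; exact hB0
  rcases eq_or_lt_of_le hx0.2 with hπ' | hπ'
  · have : f π = 0 := by
      have h1 : Real.sin (2*K*π) = 0 := by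
        have : 2*K*π = ((2*k:ℤ):ℝ)*π := by push_cast [hKdef]; ring
        rw [this]; exact Real.sin_int_mul_pi _
      simp [hf, h1]
    rw [hπ', this]; exact hB0
  -- interior critical point
  have hloc : IsLocalMax f x0 := hmax.isLocalMax (Icc_mem_nhds h0 hπ')
  have hd0 : deriv f x0 = 0 := hloc.deriv_eq_zero
  have hcrit : Real.sin (2*x0) + Real.sin (2*(2*K*x0)) = 0 := by
    have h : 2*K*(Real.sin (2*x0) + Real.sin (2*(2*K*x0))) = 0 := by
      rw [← (hderiv x0).deriv, hd0]
    rcases mul_eq_zero.1 h with h' | h'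
    · linarith
    · exact h'
  have hfact : Real.sin ((2*K+1)*x0) * Real.cos ((1-2*K)*x0) = 0 := by
    have := sin_add_sin' (2*x0) (2*(2*K*x0))
    rw [hcrit] at this
    have e1 : (2*x0 + 2*(2*K*x0))/2 = (2*K+1)*x0 := by ring
    have e2 : (2*x0 - 2*(2*K*x0))/2 = (1-2*K)*x0 := by ring
    rw [e1, e2] at this
    linarith
  rcases mul_eq_zero.1 hfact with hA | hB'
  · -- sin((2K+1) x0) = 0
    obtain ⟨m, hm⟩ := Real.sin_eq_zero_iff.1 hA
    have hsq : Real.sin (2*K*x0)^2 = Real.sin x0^2 := by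
      have h : 2*K*x0 = -x0 + (m:ℝ)*π := by linarith
      rw [h, sin_sq_add_int, Real.sin_neg]; ring
    have hx0eq : x0 = (m:ℝ)*π/(2*K+1) := by
      field_simp
      linarith
    have := lattice_le k hk m
    rw [← hKdef] at this
    calc f x0 = (2*K+1) * Real.sin x0 ^2 := by simp only [hf, hsq]; ring
    _ = (2*K+1) * Real.sin ((m:ℝ)*π/(2*K+1)) ^2 := by rw [hx0eq]
    _ ≤ B := by
        rw [hB]
        apply mul_le_mul_of_nonneg_left this (by linarith)
  · -- cos((1-2K) x0) = 0
    have hc1 : Real.cos ((2*K-1)*x0) = 0 := by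
      rw [show (2*K-1)*x0 = -((1-2*K)*x0) by ring, Real.cos_neg]; exact hB'
    have hsin : Real.sin (2*K*x0) = Real.sin ((2*K-1)*x0) * Real.cos x0 := by
      rw [show 2*K*x0 = (2*K-1)*x0 + x0 by ring, Real.sin_add, hc1]; ring
    have hs1 : Real.sin ((2*K-1)*x0)^2 = 1 := by
      nlinarith [Real.sin_sq_add_cos_sq ((2*K-1)*x0)]
    have hfx : f x0 = 2*K*Real.sin x0^2 + Real.cos x0^2 := by
      simp only [hf, hsin]
      nlinarith [hs1]
    have h2k := s_sq_ge k hk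
    rw [← hKdef] at h2k
    rw [hfx, hB]
    nlinarith [Real.sin_sq_add_cos_sq x0, sq_nonneg (Real.cos x0)]


private lemma s_nonneg (k : ℕ) (hk : 1 ≤ k) : 0 ≤ Real.sin (π * k / (2*k+1)) := by
  have hK : (1:ℝ) ≤ (k:ℝ) := by exact_mod_cast hk
  have hpi := Real.pi_pos
  apply Real.sin_nonneg_of_nonneg_of_le_pi
  · positivity
  · rw [div_le_iff₀ (by linarith)]; nlinarith

private lemma key_ineq (k : ℕ) (hk : 1 ≤ k) (φ : ℝ) :
    |Real.sin φ| ^ (2*k) * |Real.sin (2*(k:ℝ)*φ)| ≤ Real.sin (π*k/(2*k+1)) ^ (2*k+1) := by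
  have hK : (1:ℝ) ≤ (k:ℝ) := by exact_mod_cast hk
  set K := (k:ℝ) with hKdef
  set s := Real.sin (π*K/(2*K+1)) with hs
  have hs0 : 0 ≤ s := s_nonneg k hk
  set a := Real.sin φ ^ 2 with hadef
  set b := Real.sin (2*K*φ) ^ 2 with hbdef
  have ha : 0 ≤ a := sq_nonneg _
  have hb : 0 ≤ b := sq_nonneg _
  have hg : 2*K*a + b ≤ (2*K+1) * s^2 := g_le k hk φ
  have hc : (0:ℝ) < 2*K+1 := by linarith
  set w₁ : ℝ := 2*K/(2*K+1) with hw₁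
  set w₂ : ℝ := 1/(2*K+1) with hw₂
  have hw : w₁ + w₂ = 1 := by rw [hw₁, hw₂]; field_simp
  have amgm := Real.geom_mean_le_arith_mean2_weighted
    (by positivity) (by positivity) ha hb hw
  have h1 : w₁*a + w₂*b ≤ s^2 := by
    have e : w₁*a + w₂*b = (2*K*a + b)/(2*K+1) := by
      rw [hw₁, hw₂]
      field_simp
    rw [e, div_le_iff₀ hc]
    nlinarith
  have h2 : a ^ w₁ * b ^ w₂ ≤ s^2 := le_trans amgm h1
  have h3 : (a ^ w₁ * b ^ w₂) ^ (2*k+1) ≤ (s^2) ^ (2*k+1) := by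
    apply pow_le_pow_left₀ (by positivity) h2
  have h4 : (a ^ w₁ * b ^ w₂) ^ (2*k+1) = a ^ (2*k) * b := by
    rw [mul_pow]
    rw [← Real.rpow_natCast (a ^ w₁) (2*k+1), ← Real.rpow_natCast (b ^ w₂) (2*k+1)]
    rw [← Real.rpow_mul ha, ← Real.rpow_mul hb]
    have e1 : w₁ * ((2*k+1 : ℕ) : ℝ) = ((2*k : ℕ) : ℝ) := by
      rw [hw₁]; push_cast; field_simp; rw [hKdef]; ring
    have e2 : w₂ * ((2*k+1 : ℕ) : ℝ) = 1 := by
      rw [hw₂]; push_cast; field_simp; rw [hKdef]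
    rw [e1, e2, Real.rpow_natCast, Real.rpow_one]
  rw [h4] at h3
  have h5 : (|Real.sin φ| ^ (2*k) * |Real.sin (2*K*φ)|)^2 = a ^ (2*k) * b := by
    rw [hadef, hbdef, ← sq_abs (Real.sin φ), ← sq_abs (Real.sin (2*K*φ))]
    ring
  have h6 : (s ^ (2*k+1))^2 = (s^2)^(2*k+1) := by ring
  have hx : 0 ≤ |Real.sin φ| ^ (2*k) * |Real.sin (2*K*φ)| := by positivity
  have hy : 0 ≤ s ^ (2*k+1) := by positivity
  nlinarith [h3, h5, h6]



private lemma abs_neg_one_zpow' (m : ℤ) : |((-1:ℝ))^m| = 1 := by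
  rcases Int.even_or_odd m with he | ho
  · rw [he.neg_one_zpow]; norm_num
  · rw [ho.neg_one_zpow]; norm_num

private lemma abs_sin_theta0 (k : ℕ) (hk : 1 ≤ k) (j : ℕ) :
    |Real.sin ((2*(k:ℝ))^j * (π * k / (2*k+1)))| = Real.sin (π * k / (2*k+1)) := by
  have hK : (1:ℝ) ≤ (k:ℝ) := by exact_mod_cast hk
  have hc : (0:ℝ) < 2*(k:ℝ)+1 := by linarith
  have hmod : (2*(k:ℤ)) ≡ -1 [ZMOD (2*(k:ℤ)+1)] :=
    Int.modEq_iff_dvd.mpr ⟨-1, by ring⟩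
  have h1 : (2*(k:ℤ))^j * k ≡ (-1)^j * k [ZMOD (2*(k:ℤ)+1)] := (hmod.pow j).mul_right _
  obtain ⟨t, ht⟩ := h1.dvd
  have htZ : (2*(k:ℤ))^j * k = (-1)^j * k - (2*(k:ℤ)+1)*t := by linarith
  have hcast : (2*(k:ℝ))^j * (k:ℝ) = (-1:ℝ)^j * k - (2*(k:ℝ)+1) * (t:ℝ) := by
    exact_mod_cast htZ
  have harg : (2*(k:ℝ))^j * (π * k / (2*k+1))
      = (-1:ℝ)^j * (π * k / (2*k+1)) + ((-t : ℤ) : ℝ) * π := by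
    have h2 : (2*(k:ℝ))^j * (π * k / (2*k+1))
        - ((-1:ℝ)^j * (π * k / (2*k+1)) + ((-t : ℤ) : ℝ) * π) = 0 := by
      field_simp
      push_cast
      linear_combination π * hcast
    linarith
  rw [harg, Real.sin_add_int_mul_pi, abs_mul, abs_neg_one_zpow', one_mul]
  rcases Nat.even_or_odd j with he | ho
  · rw [he.neg_one_pow, one_mul, abs_of_nonneg (s_nonneg k hk)]
  · rw [ho.neg_one_pow, neg_one_mul, Real.sin_neg, abs_neg, abs_of_nonneg (s_nonneg k hk)]

private lemma L_le (k : ℕ) (hk : 1 ≤ k) (θ : ℝ) :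
    ∀ n, 1 ≤ n →
      |Real.sin θ| ^ (2*k) *
        (∏ j ∈ Finset.Ico 1 n, |Real.sin ((2*(k:ℝ))^j * θ)| ^ (2*k+1)) *
        |Real.sin ((2*(k:ℝ))^n * θ)| ≤ Real.sin (π * k / (2*k+1)) ^ ((2*k+1)*n) := by
  intro n hn
  induction n, hn using Nat.le_induction with
  | base =>
    simp only [Finset.Ico_self, Finset.prod_empty, mul_one, pow_one]
    exact key_ineq k hk θ
  | succ n hn ih =>
    rw [Finset.prod_Ico_succ_top hn]
    have hkey := key_ineq k hk ((2*(k:ℝ))^n * θ)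
    rw [show 2*(k:ℝ)*((2*(k:ℝ))^n * θ) = (2*(k:ℝ))^(n+1) * θ by ring] at hkey
    have e : |Real.sin θ| ^ (2*k) *
        ((∏ j ∈ Finset.Ico 1 n, |Real.sin ((2*(k:ℝ))^j * θ)| ^ (2*k+1)) *
          |Real.sin ((2*(k:ℝ))^n * θ)| ^ (2*k+1)) *
        |Real.sin ((2*(k:ℝ))^(n+1) * θ)|
      = (|Real.sin θ| ^ (2*k) *
          (∏ j ∈ Finset.Ico 1 n, |Real.sin ((2*(k:ℝ))^j * θ)| ^ (2*k+1)) *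
          |Real.sin ((2*(k:ℝ))^n * θ)|) *
        (|Real.sin ((2*(k:ℝ))^n * θ)| ^ (2*k) * |Real.sin ((2*(k:ℝ))^(n+1) * θ)|) := by
      ring
    rw [e, show (2*k+1)*(n+1) = (2*k+1)*n + (2*k+1) by ring,
      pow_add (Real.sin (π * k / (2*k+1))) ((2*k+1)*n) (2*k+1)]
    exact mul_le_mul ih hkey (by positivity) (pow_nonneg (s_nonneg k hk) _)

private lemma rhs_eq (k n : ℕ) (hk : 1 ≤ k) (hn : 1 ≤ n) :
    |Real.sin (π * k / (2*k+1)) ^ (2*k) *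
        (∏ j ∈ Finset.Ico 1 n,
          Real.sin ((2*(k:ℝ))^j * (π * k / (2*k+1))) ^ (2*k+1)) *
        Real.sin ((2*(k:ℝ))^n * (π * k / (2*k+1)))|
      = Real.sin (π * k / (2*k+1)) ^ ((2*k+1)*n) := by
  rw [abs_mul, abs_mul, abs_pow, abs_prod, abs_of_nonneg (s_nonneg k hk),
    abs_sin_theta0 k hk n]
  have hterm : ∀ j ∈ Finset.Ico 1 n,
      |Real.sin ((2*(k:ℝ))^j * (π * k / (2*k+1))) ^ (2*k+1)|
        = Real.sin (π * k / (2*k+1)) ^ (2*k+1) := by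
    intro j _
    rw [abs_pow, abs_sin_theta0 k hk j]
  rw [Finset.prod_congr rfl hterm, Finset.prod_const, Nat.card_Ico,
    ← pow_mul, ← pow_add, ← pow_succ]
  congr 1
  cases n with
  | zero => omega
  | succ m =>
    simp only [Nat.succ_sub_one]
    ring

theorem sine_step_b (k n : ℕ) (hk : 1 ≤ k) (hn : 1 ≤ n) (θ : ℝ) :
    |Real.sin θ ^ (2 * k) *
        (∏ j ∈ Finset.Ico 1 n, Real.sin ((2 * (k : ℝ)) ^ j * θ) ^ (2 * k + 1)) *
        Real.sin ((2 * (k : ℝ)) ^ n * θ)| ≤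
    |Real.sin (π * k / (2 * k + 1)) ^ (2 * k) *
        (∏ j ∈ Finset.Ico 1 n,
          Real.sin ((2 * (k : ℝ)) ^ j * (π * k / (2 * k + 1))) ^ (2 * k + 1)) *
        Real.sin ((2 * (k : ℝ)) ^ n * (π * k / (2 * k + 1)))| := by
  calc |Real.sin θ ^ (2 * k) *
        (∏ j ∈ Finset.Ico 1 n, Real.sin ((2 * (k : ℝ)) ^ j * θ) ^ (2 * k + 1)) *
        Real.sin ((2 * (k : ℝ)) ^ n * θ)|
      = |Real.sin θ| ^ (2*k) *
        (∏ j ∈ Finset.Ico 1 n, |Real.sin ((2*(k:ℝ))^j * θ)| ^ (2*k+1)) *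
        |Real.sin ((2*(k:ℝ))^n * θ)| := by
        rw [abs_mul, abs_mul, abs_pow, abs_prod]
        simp only [abs_pow]
    _ ≤ Real.sin (π * k / (2*k+1)) ^ ((2*k+1)*n) := L_le k hk θ n hn
    _ = _ := (rhs_eq k n hk hn).symm
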